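/- The smallest ℂ-subspace of Z that contains the six elements ρ⁺, ρ⁻, ε₁⁺, ε₁⁻, ε₂⁺, ε₃⁻ and is closed under the Zorn product equals the sextonion subspace S; i.e., the subalgebra of Z generated by {ρ⁺, ρ⁻, ε₁⁺, ε₁⁻, ε₂⁺, ε₃⁻} is exactly S. -/
import Mathlib


open Matrix

/-- 3-component complex vectors. -/
abbrev V3 := Fin 3 → ℂ

/-- The standard cross product on ℂ³. -/
def cross (A B : V3) : V3 := crossProduct A B

/-- The Zorn vector-matrix algebra over ℂ: elements x = (α⁺, A⁺, A⁻, α⁻). -/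
abbrev Zorn := ℂ × V3 × V3 × ℂ

/-- The Zorn product
x·y = (α⁺β⁺ − ⟨A⁺,B⁻⟩, α⁺B⁺ + β⁻A⁺ + A⁻×B⁻, β⁺A⁻ + α⁻B⁻ + A⁺×B⁺, α⁻β⁻ − ⟨A⁻,B⁺⟩). -/
noncomputable def zmul (x y : Zorn) : Zorn :=
  ( x.1 * y.1 - x.2.1 ⬝ᵥ y.2.2.1,
    x.1 • y.2.1 + y.2.2.2 • x.2.1 + cross x.2.2.1 y.2.2.1,
    y.1 • x.2.2.1 + x.2.2.2 • y.2.2.1 + cross x.2.1 y.2.1,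
    x.2.2.2 * y.2.2.2 - x.2.2.1 ⬝ᵥ y.2.1 )

/-- The unit 1 = (1,0,0,1) of the Zorn algebra. -/
noncomputable def zunit : Zorn := (1, 0, 0, 1)

/-- Membership in the sextonion subspace S : A⁺₃ = 0 and A⁻₂ = 0. -/
def inS (x : Zorn) : Prop := x.2.1 2 = 0 ∧ x.2.2.1 1 = 0

/-- The sextonion subspace S as a ℂ-submodule of the Zorn algebra. -/
noncomputable def Ssub : Submodule ℂ Zorn where
  carrier := {x | inS x}
  add_mem' := by
    rintro x y ⟨hx1, hx2⟩ ⟨hy1, hy2⟩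
    exact ⟨by simp [inS, Prod.fst_add, Prod.snd_add, Pi.add_apply, hx1, hy1],
           by simp [inS, Prod.fst_add, Prod.snd_add, Pi.add_apply, hx2, hy2]⟩
  zero_mem' := ⟨rfl, rfl⟩
  smul_mem' := by
    rintro c x ⟨hx1, hx2⟩
    exact ⟨by simp [inS, Prod.smul_fst, Prod.smul_snd, Pi.smul_apply, hx1],
           by simp [inS, Prod.smul_fst, Prod.smul_snd, Pi.smul_apply, hx2]⟩

/-- ρ⁺ = (1,0,0,0). -/
noncomputable def rhoP : Zorn := (1, 0, 0, 0)
/-- ρ⁻ = (0,0,0,1). -/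
noncomputable def rhoM : Zorn := (0, 0, 0, 1)
/-- ε_k⁺ = (0, e_k, 0, 0). -/
noncomputable def epsP (k : Fin 3) : Zorn := (0, Pi.single k 1, 0, 0)
/-- ε_k⁻ = (0, 0, e_k, 0). -/
noncomputable def epsM (k : Fin 3) : Zorn := (0, 0, Pi.single k 1, 0)

/-- The six generators ρ⁺, ρ⁻, ε₁⁺, ε₁⁻, ε₂⁺, ε₃⁻. -/
noncomputable def sexGens : Set Zorn := {rhoP, rhoM, epsP 0, epsM 0, epsP 1, epsM 2}

/-- the smallest ℂ-subspace of Z containing ρ⁺, ρ⁻, ε₁⁺, ε₁⁻, ε₂⁺, ε₃⁻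
and closed under the Zorn product is exactly the sextonion subspace S. -/
theorem sextonions_generated :
    sexGens ⊆ (Ssub : Set Zorn) ∧
    (∀ x ∈ Ssub, ∀ y ∈ Ssub, zmul x y ∈ Ssub) ∧
    (∀ W : Submodule ℂ Zorn, sexGens ⊆ (W : Set Zorn) →
      (∀ x ∈ W, ∀ y ∈ W, zmul x y ∈ W) → Ssub ≤ W) := by

  refine ⟨?_, ?_, ?_⟩
  · rintro x hx
    rcases hx with rfl | rfl | rfl | rfl | rfl | rfl <;>
      exact ⟨by simp [rhoP, rhoM, epsP, epsM, Pi.single_apply],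
             by simp [rhoP, rhoM, epsP, epsM, Pi.single_apply]⟩
  · rintro x ⟨hx1, hx2⟩ y ⟨hy1, hy2⟩
    constructor
    · show (x.1 • y.2.1 + y.2.2.2 • x.2.1 + cross x.2.2.1 y.2.2.1) 2 = 0
      simp [cross, crossProduct, hx1, hy1, hx2, hy2]
    · show (y.1 • x.2.2.1 + x.2.2.2 • y.2.2.1 + cross x.2.1 y.2.1) 1 = 0
      simp [cross, crossProduct, hx1, hy1, hx2, hy2]
  · intro W hgen hmul x hx
    obtain ⟨h1, h2⟩ := hx
    have hrp : rhoP ∈ W := hgen (by simp [sexGens])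
    have hrm : rhoM ∈ W := hgen (by simp [sexGens])
    have hp0 : epsP 0 ∈ W := hgen (by simp [sexGens])
    have hp1 : epsP 1 ∈ W := hgen (by simp [sexGens])
    have hm0 : epsM 0 ∈ W := hgen (by simp [sexGens])
    have hm2 : epsM 2 ∈ W := hgen (by simp [sexGens])
    have hxeq : x = x.1 • rhoP + (x.2.1 0) • epsP 0 + (x.2.1 1) • epsP 1 +
        (x.2.2.1 0) • epsM 0 + (x.2.2.1 2) • epsM 2 + x.2.2.2 • rhoM := by
      refine Prod.ext ?_ (Prod.ext ?_ (Prod.ext ?_ ?_))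
      · simp [rhoP, rhoM, epsP, epsM]
      · funext i
        fin_cases i <;>
          simp [rhoP, rhoM, epsP, epsM, Pi.single_apply, h1]
      · funext i
        fin_cases i <;>
          simp [rhoP, rhoM, epsP, epsM, Pi.single_apply, h2]
      · simp [rhoP, rhoM, epsP, epsM]
    rw [hxeq]
    exact W.add_mem (W.add_mem (W.add_mem (W.add_mem (W.add_mem
      (W.smul_mem _ hrp) (W.smul_mem _ hp0)) (W.smul_mem _ hp1))
      (W.smul_mem _ hm0)) (W.smul_mem _ hm2)) (W.smul_mem _ hrm)
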